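/- Let a₁,a₂,a₃ be pairwise coprime positive integers with a₁ > a₂ > a₃ > 1, and suppose L₁ = 2. Then for every {j,k} = {2,3} (i.e. for (j,k) = (2,3) and (j,k) = (3,2)), one has [L_j·a_j·a_k⁻¹]_{a₁}·a_k = L_j·a_j − a₁. -/

import Mathlib

/-- The numerical semigroup generated by `a` and `b`:
`⟨a,b⟩ = {λ₁a + λ₂b : λ₁, λ₂ ∈ ℕ}`. -/
def numSg (a b : ℕ) : Set ℕ := {x | ∃ p q : ℕ, x = p * a + q * b}

/-- `[m⁻¹]ₙ`: the representative in `[0,n)` of the inverse of `m` modulo `n`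
(meaningful when `gcd m n = 1` and `n > 0`).  The remainder operator `[m]ₙ`
is ordinary `m % n`. -/
noncomputable def modInv (m n : ℕ) : ℕ := ((m : ZMod n)⁻¹).val


/-- `Lval a b c` is the least positive integer `x` with `x*a ∈ ⟨b,c⟩`. -/
noncomputable def Lval (a b c : ℕ) : ℕ := sInf {x : ℕ | 0 < x ∧ x * a ∈ numSg b c}

lemma numSg_comm (a b : ℕ) : numSg a b = numSg b a := by
  ext x
  constructor <;> rintro ⟨p, q, rfl⟩ <;> exact ⟨q, p, by ring⟩

/-- Key structural lemma: if `a ∉ ⟨b,c⟩` but `2a ∈ ⟨b,c⟩`, with suitable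
coprimality and size conditions, then `L·b = a + μ·c` with `μ < a`, where
`L = Lval b a c`. -/
lemma aux_rep (a b c : ℕ) (hb2 : 2 < b) (hc2 : 2 < c) (hba : b < a)
    (hab : Nat.Coprime a b) (hac : Nat.Coprime a c) (hbc : Nat.Coprime b c)
    (hL1 : a ∉ numSg b c) (h2 : 2 * a ∈ numSg b c) :
    ∃ μ : ℕ, μ < a ∧ Lval b a c * b = a + μ * c := by
  haveI : NeZero c := ⟨by omega⟩
  obtain ⟨p, q, h2eq⟩ := h2
  have ha0 : 0 < a := by omega
  -- the set defining L is nonempty (it contains c)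
  have hne : ({x : ℕ | 0 < x ∧ x * b ∈ numSg a c} : Set ℕ).Nonempty :=
    ⟨c, by omega, ⟨0, b, by ring⟩⟩
  have hmemL : 0 < Lval b a c ∧ Lval b a c * b ∈ numSg a c := Nat.sInf_mem hne
  set L := Lval b a c with hLdef
  have hminL : ∀ x, 0 < x → x * b ∈ numSg a c → L ≤ x := by
    intro x hx hm
    exact Nat.sInf_le ⟨hx, hm⟩
  -- construct u < c with u*b ≡ a (mod c)
  have hbu : IsUnit ((b : ZMod c)) := (ZMod.isUnit_iff_coprime b c).mpr hbc
  set u : ℕ := ((a : ZMod c) * (b : ZMod c)⁻¹).val with hu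
  have hult : u < c := ZMod.val_lt _
  have hub : ((u * b : ℕ) : ZMod c) = ((a : ℕ) : ZMod c) := by
    push_cast
    rw [hu, ZMod.natCast_val, ZMod.cast_id]
    rw [mul_assoc, ZMod.inv_mul_of_unit _ hbu, mul_one]
  have hmod : (u * b) % c = a % c := by
    have := (ZMod.natCast_eq_natCast_iff _ _ _).mp hub
    exact this
  -- u*b ≥ a (otherwise a ∈ ⟨b,c⟩)
  have huba : a ≤ u * b := by
    by_contra hlt
    push_neg at hlt
    have hdvd : c ∣ a - u * b := (Nat.modEq_iff_dvd' hlt.le).mp hmod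
    obtain ⟨s, hs⟩ := hdvd
    rw [mul_comm c s] at hs
    exact hL1 ⟨u, s, by omega⟩
  have hu0 : 0 < u := by
    rcases Nat.eq_zero_or_pos u with h | h
    · rw [h, zero_mul] at huba; omega
    · exact h
  -- u*b ∈ ⟨a,c⟩, hence L ≤ u < c
  have hdvd2 : c ∣ u * b - a := (Nat.modEq_iff_dvd' huba).mp hmod.symm
  obtain ⟨s, hs⟩ := hdvd2
  rw [mul_comm c s] at hs
  have hLu : L ≤ u := hminL u hu0 ⟨1, s, by omega⟩
  have hLc : L < c := lt_of_le_of_lt hLu hult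
  -- representation of L*b
  obtain ⟨lam, μ, hrep⟩ := hmemL.2
  -- lam ≠ 0
  have hlam0 : lam ≠ 0 := by
    rintro rfl
    simp only [zero_mul, zero_add] at hrep
    have : c ∣ L * b := ⟨μ, by rw [hrep]; ring⟩
    have : c ∣ L := (Nat.Coprime.dvd_of_dvd_mul_right hbc.symm) this
    have := Nat.le_of_dvd hmemL.1 this
    omega
  -- lam < 2
  have hlam2 : lam < 2 := by
    by_contra hge
    push_neg at hge
    have hp0 : 0 < p := by
      rcases Nat.eq_zero_or_pos p with h | h
      · subst h
        simp only [zero_mul, zero_add] at h2eq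
        have : c ∣ 2 * a := ⟨q, by rw [h2eq]; ring⟩
        have : c ∣ 2 := (Nat.Coprime.dvd_of_dvd_mul_right hac.symm) this
        have := Nat.le_of_dvd (by norm_num) this
        omega
      · exact h
    rcases lt_or_ge p L with hp | hp
    · -- (L-p)*b = (lam-2)*a + (μ+q)*c ∈ ⟨a,c⟩, contradicting minimality
      have heq : (L - p) * b = (lam - 2) * a + (μ + q) * c := by
        have h1 : ((L : ℤ) - p) * b = ((lam : ℤ) - 2) * a + ((μ : ℤ) + q) * c := by
          have e1 : (L : ℤ) * b = lam * a + μ * c := by exact_mod_cast hrep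
          have e2 : (2 : ℤ) * a = p * b + q * c := by exact_mod_cast h2eq
          linarith [e1, e2]
        have h2' : (((L - p) * b : ℕ) : ℤ) = (((lam - 2) * a + (μ + q) * c : ℕ) : ℤ) := by
          push_cast [Nat.cast_sub hp.le, Nat.cast_sub hge]
          push_cast at h1 ⊢
          linarith
        exact_mod_cast h2'
      have := hminL (L - p) (by omega) ⟨lam - 2, μ + q, heq⟩
      omega
    · -- L ≤ p : then L*b ≤ 2a, forcing lam = 2, μ = 0, L*b = 2a, so b ∣ 2
      have h1 : L * b ≤ 2 * a := by
        calc L * b ≤ p * b := Nat.mul_le_mul_right b hp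
        _ ≤ p * b + q * c := Nat.le_add_right _ _
        _ = 2 * a := h2eq.symm
      have h2a : 2 * a ≤ lam * a := Nat.mul_le_mul_right a hge
      have hμc : μ * c = 0 := by omega
      have hμ0 : μ = 0 := by
        rcases Nat.mul_eq_zero.mp hμc with h | h
        · exact h
        · omega
      have hlameq : lam * a = 2 * a := by omega
      have hLb : L * b = 2 * a := by omega
      have hbdvd : b ∣ 2 * a := ⟨L, by rw [← hLb]; ring⟩
      have : b ∣ 2 := (Nat.Coprime.dvd_of_dvd_mul_right hab.symm) hbdvd
      have := Nat.le_of_dvd (by norm_num) this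
      omega
  -- so lam = 1
  have hlam1 : lam = 1 := by omega
  subst hlam1
  rw [one_mul] at hrep
  refine ⟨μ, ?_, hrep⟩
  -- μ < a since μ*c = L*b - a < c*a
  have e1 : L * b ≤ (c - 1) * b := Nat.mul_le_mul_right b (by omega)
  have e2 : (c - 1) * b ≤ (c - 1) * a := Nat.mul_le_mul_left _ hba.le
  have e3 : (c - 1) * a + a = c * a := by
    have : c - 1 + 1 = c := by omega
    calc (c - 1) * a + a = (c - 1 + 1) * a := by ring
    _ = c * a := by rw [this]
  have h1 : μ * c < c * a := by omega
  have h1' : μ * c < a * c := by linarith [h1]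
  exact Nat.lt_of_mul_lt_mul_right h1'

/-- Modular arithmetic lemma: if `n ≡ μ·c (mod a)` with `μ < a` and `c` coprime
to `a`, then `(n · c⁻¹) % a = μ`. -/
lemma mod_key (a c n μ : ℕ) (ha : 1 < a) (hc : Nat.Coprime c a) (hμ : μ < a)
    (h : (n : ZMod a) = (μ : ZMod a) * (c : ZMod a)) :
    (n * modInv c a) % a = μ := by
  haveI : NeZero a := ⟨by omega⟩
  have hcu : IsUnit ((c : ZMod a)) := (ZMod.isUnit_iff_coprime c a).mpr hc
  have h1 : ((n * modInv c a : ℕ) : ZMod a) = (μ : ZMod a) := by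
    push_cast
    rw [modInv, ZMod.natCast_val, ZMod.cast_id, h]
    rw [mul_assoc, ZMod.mul_inv_of_unit _ hcu, mul_one]
  calc (n * modInv c a) % a = ((n * modInv c a : ℕ) : ZMod a).val := (ZMod.val_natCast _ _).symm
  _ = ((μ : ℕ) : ZMod a).val := by rw [h1]
  _ = μ % a := ZMod.val_natCast _ _
  _ = μ := Nat.mod_eq_of_lt hμ

/-- Lemma 8(2): for pairwise coprime `a₁ > a₂ > a₃ > 1` with `L₁ = 2`, for
each `{j,k} = {2,3}` one has `[L_j·a_j·a_k⁻¹]_{a₁}·a_k = L_j·a_j − a₁`. -/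
theorem stmt11 (a₁ a₂ a₃ : ℕ)
    (h12 : Nat.Coprime a₁ a₂) (h13 : Nat.Coprime a₁ a₃) (h23 : Nat.Coprime a₂ a₃)
    (hgt : a₁ > a₂ ∧ a₂ > a₃ ∧ a₃ > 1)
    (hL₁ : Lval a₁ a₂ a₃ = 2) :
    (((Lval a₂ a₁ a₃ * a₂ * modInv a₃ a₁) % a₁ : ℕ) : ℤ) * a₃ =
        (Lval a₂ a₁ a₃ : ℤ) * a₂ - a₁ ∧
    (((Lval a₃ a₁ a₂ * a₃ * modInv a₂ a₁) % a₁ : ℕ) : ℤ) * a₂ =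
        (Lval a₃ a₁ a₂ : ℤ) * a₃ - a₁ := by
  obtain ⟨h21, h32, h31⟩ := hgt
  -- the defining set of L₁ is nonempty, and its min is 2
  have hne : ({x : ℕ | 0 < x ∧ x * a₁ ∈ numSg a₂ a₃} : Set ℕ).Nonempty := by
    by_contra h
    rw [Set.not_nonempty_iff_eq_empty] at h
    rw [Lval, h, Nat.sInf_empty] at hL₁
    omega
  have hmem : (2 : ℕ) ∈ {x : ℕ | 0 < x ∧ x * a₁ ∈ numSg a₂ a₃} := by
    have := Nat.sInf_mem hne
    rwa [← Lval, hL₁] at this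
  have h2a : 2 * a₁ ∈ numSg a₂ a₃ := hmem.2
  have hnot : a₁ ∉ numSg a₂ a₃ := by
    intro h
    have h1 : (1 : ℕ) ∈ {x : ℕ | 0 < x ∧ x * a₁ ∈ numSg a₂ a₃} := ⟨one_pos, by rwa [one_mul]⟩
    have := Nat.sInf_le h1
    rw [← Lval, hL₁] at this
    omega
  -- a₃ ≠ 2
  have ha3 : 2 < a₃ := by
    rcases Nat.lt_or_ge 2 a₃ with h | h
    · exact h
    · exfalso
      have ha3' : a₃ = 2 := by omega
      subst ha3'
      have h1odd : ¬ (2 ∣ a₁) := by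
        intro hd
        have := Nat.Coprime.eq_one_of_dvd h13.symm hd
        omega
      have h2odd : ¬ (2 ∣ a₂) := by
        intro hd
        have := Nat.Coprime.eq_one_of_dvd (h23.symm.symm : Nat.Coprime a₂ 2).symm hd
        omega
      have : 2 ∣ a₁ - a₂ := by omega
      obtain ⟨t, ht⟩ := this
      exact hnot ⟨1, t, by omega⟩
  have ha2 : 2 < a₂ := by omega
  -- apply the structural lemma for j = 2 and j = 3
  obtain ⟨μ₂, hμ₂lt, hμ₂⟩ := aux_rep a₁ a₂ a₃ ha2 ha3 h21 h12 h13 h23 hnot h2a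
  have hnot' : a₁ ∉ numSg a₃ a₂ := by rwa [numSg_comm]
  have h2a' : 2 * a₁ ∈ numSg a₃ a₂ := by rwa [numSg_comm]
  obtain ⟨μ₃, hμ₃lt, hμ₃⟩ := aux_rep a₁ a₃ a₂ ha3 ha2 (by omega) h13 h12 h23.symm hnot' h2a'
  have ha1 : 1 < a₁ := by omega
  constructor
  · have hmod : (Lval a₂ a₁ a₃ * a₂ * modInv a₃ a₁) % a₁ = μ₂ := by
      apply mod_key a₁ a₃ _ μ₂ ha1 h13.symm hμ₂lt
      have : ((Lval a₂ a₁ a₃ * a₂ : ℕ) : ZMod a₁) = ((a₁ + μ₂ * a₃ : ℕ) : ZMod a₁) := by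
        rw [hμ₂]
      push_cast at this ⊢
      rw [this, ZMod.natCast_self]
      ring
    rw [hmod]
    have : (Lval a₂ a₁ a₃ : ℤ) * a₂ = a₁ + μ₂ * a₃ := by exact_mod_cast hμ₂
    linarith
  · have hmod : (Lval a₃ a₁ a₂ * a₃ * modInv a₂ a₁) % a₁ = μ₃ := by
      apply mod_key a₁ a₂ _ μ₃ ha1 h12.symm hμ₃lt
      have : ((Lval a₃ a₁ a₂ * a₃ : ℕ) : ZMod a₁) = ((a₁ + μ₃ * a₂ : ℕ) : ZMod a₁) := by
        rw [hμ₃]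
      push_cast at this ⊢
      rw [this, ZMod.natCast_self]
      ring
    rw [hmod]
    have : (Lval a₃ a₁ a₂ : ℤ) * a₃ = a₁ + μ₃ * a₂ := by exact_mod_cast hμ₃
    linarith
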